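/- arXiv:1705.08335 — 2 statements merged into one kernel-verified Lean document; each statement's English description precedes it below -/
import Mathlib

section
/- If A carries the maximal prolongation of a first order differential calculus and (E, ∇_E, σ_E) is a left bimodule connection whose curvature R_E is a right A-module map, then (id⊗σ_E)(σ_E⊗id) maps E ⊗_A ker(∧) into ker(∧) ⊗_A E, so σ_E extends to E ⊗_A Ω² → Ω² ⊗_A E (and the connection is extendable). -/
lemma span_ext' {M N : Type*} [AddCommGroup M] [AddCommGroup N] {s : Set M}
    (hs : ∀ x : M, x ∈ AddSubgroup.closure s) (f g : M →+ N)
    (h : ∀ x ∈ s, f x = g x) (x : M) : f x = g x := by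
  have hle : AddSubgroup.closure s ≤ (f - g).ker := by
    rw [AddSubgroup.closure_le]
    intro y hy
    simp [AddMonoidHom.mem_ker, sub_eq_zero, h y hy]
  have hx := hle (hs x)
  simpa [AddMonoidHom.mem_ker, sub_eq_zero] using hx


/-- if `A` carries the maximal prolongation of a first order calculus and
`(E, ∇_E, σ_E)` is a left bimodule connection whose curvature `R_E` is a right
`A`-module map, then `Φ = (id⊗σ_E)(σ_E⊗id)` maps `E⊗_A ker∧` into `ker∧⊗_A E`, and
hence `σ_E` extends to a map `E⊗_AΩ² → Ω²⊗_AE` (so the connection is extendable in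
degree 2).  Here `Ω² = (Ω¹⊗_AΩ¹)/ker∧` where `ker∧ = K` is the sub-bimodule generated
by the elements `da⊗db + dr⊗ds` for relations `a·db = dr·s` (implicit sums), and all
tensor products are realised abstractly: `T11 = Ω¹⊗Ω¹`, `TE = Ω¹⊗E`, `ET = E⊗Ω¹`,
`ET11 = E⊗Ω¹⊗Ω¹`, `T11E = Ω¹⊗Ω¹⊗E`, with `E⊗Ω²`, `Ω²⊗E` the corresponding
quotients. -/
theorem maximal_prolongation_extendability
    {A Ω1 E T11 TE ET ET11 T11E : Type*} [Ring A]
    [AddCommGroup Ω1] [AddCommGroup E] [AddCommGroup T11] [AddCommGroup TE]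
    [AddCommGroup ET] [AddCommGroup ET11] [AddCommGroup T11E]
    [Module A Ω1] [Module A E] [Module A T11] [Module A TE]
    -- first order calculus: right action of A on Ω¹ and the differential d
    (rΩ : Ω1 →+ A →+ Ω1)
    (hrΩ1 : ∀ (ξ : Ω1) (a b : A), rΩ (rΩ ξ a) b = rΩ ξ (a * b))
    (hrΩ2 : ∀ (a : A) (ξ : Ω1) (b : A), rΩ (a • ξ) b = a • rΩ ξ b)
    (hrΩ3 : ∀ ξ : Ω1, rΩ ξ 1 = ξ)
    (d0 : A →+ Ω1)
    (hleib : ∀ a b : A, d0 (a * b) = a • d0 b + rΩ (d0 a) b)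
    (hΩspan : ∀ ξ : Ω1,
      ξ ∈ AddSubgroup.closure {x : Ω1 | ∃ a b : A, x = a • d0 b})
    -- T11 = Ω¹ ⊗_A Ω¹ with its bimodule structure
    (tens11 : Ω1 →+ Ω1 →+ T11)
    (h11mod : ∀ (a : A) (ξ η : Ω1), a • tens11 ξ η = tens11 (a • ξ) η)
    (rT11 : T11 →+ A →+ T11)
    (hrT11 : ∀ (ξ η : Ω1) (a : A), rT11 (tens11 ξ η) a = tens11 ξ (rΩ η a))
    (h11bal : ∀ (ξ : Ω1) (a : A) (η : Ω1), tens11 (rΩ ξ a) η = tens11 ξ (a • η))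
    (h11span : ∀ x : T11,
      x ∈ AddSubgroup.closure (Set.range fun p : Ω1 × Ω1 => tens11 p.1 p.2))
    -- K = ker∧ ⊆ Ω¹⊗Ω¹ : the sub-bimodule generated by the quadratic relations
    (K : AddSubgroup T11)
    (hK : K = AddSubgroup.closure
      {x : T11 | ∃ (p q : ℕ) (a b : Fin p → A) (r s : Fin q → A) (c c' : A),
        (∑ i, a i • d0 (b i)) = (∑ j, rΩ (d0 (r j)) (s j)) ∧
        x = c • rT11 ((∑ i, tens11 (d0 (a i)) (d0 (b i)))
                      + ∑ j, tens11 (d0 (r j)) (d0 (s j))) c'})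
    -- the A-bimodule E
    (rE : E →+ A →+ E)
    (hrE1 : ∀ (e : E) (a b : A), rE (rE e a) b = rE e (a * b))
    (hrE2 : ∀ (a : A) (e : E) (b : A), rE (a • e) b = a • rE e b)
    (hrE3 : ∀ e : E, rE e 1 = e)
    -- TE = Ω¹⊗_A E and ET = E⊗_A Ω¹
    (tensTE : Ω1 →+ E →+ TE) (tensET : E →+ Ω1 →+ ET)
    (hTEmod : ∀ (a : A) (ξ : Ω1) (e : E), a • tensTE ξ e = tensTE (a • ξ) e)
    (rTE : TE →+ A →+ TE)
    (hrTE : ∀ (ξ : Ω1) (e : E) (a : A), rTE (tensTE ξ e) a = tensTE ξ (rE e a))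
    (hTEspan : ∀ x : TE,
      x ∈ AddSubgroup.closure (Set.range fun p : Ω1 × E => tensTE p.1 p.2))
    -- the left bimodule connection (∇_E, σ_E)
    (nabE : E →+ TE)
    (hconn : ∀ (a : A) (e : E), nabE (a • e) = tensTE (d0 a) e + a • nabE e)
    (σ : ET →+ TE)
    (hbiconn : ∀ (e : E) (a : A),
      nabE (rE e a) = σ (tensET e (d0 a)) + rTE (nabE e) a)
    (hσmod : ∀ (a : A) (e : E) (ξ : Ω1),
      σ (tensET (a • e) ξ) = a • σ (tensET e ξ))
    (hσrmod : ∀ (e : E) (ξ : Ω1) (a : A),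
      σ (tensET e (rΩ ξ a)) = rTE (σ (tensET e ξ)) a)
    -- the triple tensor products and the map Φ = (id⊗σ)(σ⊗id)
    (imap : E →+ T11 →+ ET11) (jmap : T11 →+ E →+ T11E)
    (jlift : Ω1 → TE →+ T11E)
    (hjlift : ∀ (ξ η : Ω1) (e : E), jlift ξ (tensTE η e) = jmap (tens11 ξ η) e)
    (C : TE →+ Ω1 →+ T11E)
    (hC : ∀ (ξ : Ω1) (e : E) (η : Ω1),
      C (tensTE ξ e) η = jlift ξ (σ (tensET e η)))
    (Φ : ET11 →+ T11E)
    (hΦ : ∀ (e : E) (ξ η : Ω1),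
      Φ (imap e (tens11 ξ η)) = C (σ (tensET e ξ)) η)
    -- the images of K in the triple tensor products
    (JK : AddSubgroup T11E)
    (hJK : JK = AddSubgroup.closure {y : T11E | ∃ x ∈ K, ∃ e : E, y = jmap x e})
    (JE : AddSubgroup ET11)
    (hJE : JE = AddSubgroup.closure {y : ET11 | ∃ x ∈ K, ∃ e : E, y = imap e x})
    -- Ω² = (Ω¹⊗Ω¹)/K (maximal prolongation) and its differential
    (d1 : Ω1 →+ T11 ⧸ K)
    (hd1 : ∀ a b : A,
      d1 (a • d0 b) = QuotientAddGroup.mk' K (tens11 (d0 a) (d0 b)))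
    -- the structure maps into Ω²⊗_A E = T11E/JK and the curvature R_E
    (m2 : T11 ⧸ K →+ E →+ T11E ⧸ JK)
    (hm2 : ∀ (x : T11) (e : E),
      m2 (QuotientAddGroup.mk' K x) e = QuotientAddGroup.mk' JK (jmap x e))
    (DT : TE →+ T11E ⧸ JK)
    (hDT : ∀ (ξ : Ω1) (e : E), DT (tensTE ξ e) = m2 (d1 ξ) e)
    (wl : Ω1 → TE →+ T11E ⧸ JK)
    (hwl : ∀ (ξ η : Ω1) (e : E),
      wl ξ (tensTE η e) = QuotientAddGroup.mk' JK (jmap (tens11 ξ η) e))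
    (WL : TE →+ T11E ⧸ JK)
    (hWL : ∀ (ξ : Ω1) (e : E), WL (tensTE ξ e) = wl ξ (nabE e))
    (rT2E : T11E ⧸ JK →+ A →+ T11E ⧸ JK)
    (hrT2E : ∀ (x : T11) (e : E) (a : A),
      rT2E (QuotientAddGroup.mk' JK (jmap x e)) a
        = QuotientAddGroup.mk' JK (jmap x (rE e a)))
    -- hypothesis: the curvature R_E = (d⊗id − id∧∇_E)∇_E is a right module map
    (hR : ∀ (e : E) (a : A),
      DT (nabE (rE e a)) - WL (nabE (rE e a))
        = rT2E (DT (nabE e) - WL (nabE e)) a) :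
    -- conclusion: Φ maps E⊗_A ker∧ into ker∧⊗_A E, hence σ extends to degree 2
    (∀ (e : E), ∀ x ∈ K, Φ (imap e x) ∈ JK)
    ∧ ∃ σ2 : ET11 ⧸ JE →+ T11E ⧸ JK,
        ∀ z : ET11,
          σ2 (QuotientAddGroup.mk' JE z) = QuotientAddGroup.mk' JK (Φ z) := by
  -- abbreviation lemmas proved by span induction over TE
  have hjw : ∀ (ξ : Ω1) (ψ : TE),
      QuotientAddGroup.mk' JK (jlift ξ ψ) = wl ξ ψ := by
    intro ξ ψ
    refine span_ext' hTEspan ((QuotientAddGroup.mk' JK).comp (jlift ξ)) (wl ξ) ?_ ψ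
    rintro x ⟨⟨η, g⟩, rfl⟩
    simp [hjlift, hwl]
  have hwr : ∀ (ξ : Ω1) (aa : A) (ψ : TE),
      wl ξ (rTE ψ aa) = rT2E (wl ξ ψ) aa := by
    intro ξ aa ψ
    refine span_ext' hTEspan ((wl ξ).comp (rTE.flip aa))
      ((rT2E.flip aa).comp (wl ξ)) ?_ ψ
    rintro x ⟨⟨η, g⟩, rfl⟩
    simp only [AddMonoidHom.comp_apply, AddMonoidHom.flip_apply]
    rw [hrTE, hwl, hwl, hrT2E]
  have hCr : ∀ (ψ : TE) (η : Ω1) (aa : A),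
      QuotientAddGroup.mk' JK (C ψ (rΩ η aa))
        = rT2E (QuotientAddGroup.mk' JK (C ψ η)) aa := by
    intro ψ η aa
    refine span_ext' hTEspan
      ((QuotientAddGroup.mk' JK).comp (C.flip (rΩ η aa)))
      ((rT2E.flip aa).comp ((QuotientAddGroup.mk' JK).comp (C.flip η))) ?_ ψ
    rintro x ⟨⟨ξ, g⟩, rfl⟩
    simp only [AddMonoidHom.comp_apply, AddMonoidHom.flip_apply]
    rw [hC, hσrmod, hjw, hwr, ← hjw, ← hC]
  have hm2r : ∀ (ω : T11 ⧸ K) (g : E) (aa : A),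
      m2 ω (rE g aa) = rT2E (m2 ω g) aa := by
    intro ω g aa
    refine QuotientAddGroup.induction_on ω fun x => ?_
    rw [show ((x : T11 ⧸ K)) = QuotientAddGroup.mk' K x from rfl, hm2, hm2, hrT2E]
  have hDr : ∀ (aa : A) (ψ : TE), DT (rTE ψ aa) = rT2E (DT ψ) aa := by
    intro aa ψ
    refine span_ext' hTEspan (DT.comp (rTE.flip aa)) ((rT2E.flip aa).comp DT) ?_ ψ
    rintro x ⟨⟨ξ, g⟩, rfl⟩
    simp [AddMonoidHom.flip_apply, hrTE, hDT, hm2r]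
  have hWr : ∀ (aa : A) (ψ : TE),
      WL (rTE ψ aa) = QuotientAddGroup.mk' JK (C ψ (d0 aa)) + rT2E (WL ψ) aa := by
    intro aa ψ
    refine span_ext' hTEspan (WL.comp (rTE.flip aa))
      (((QuotientAddGroup.mk' JK).comp (C.flip (d0 aa))) + ((rT2E.flip aa).comp WL)) ?_ ψ
    rintro x ⟨⟨ξ, g⟩, rfl⟩
    simp only [AddMonoidHom.comp_apply, AddMonoidHom.flip_apply, AddMonoidHom.add_apply]
    rw [hrTE, hWL, hbiconn, map_add, hwr, ← hjw, ← hC, ← hWL]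
  have hL1 : ∀ (ψ : TE) (aa bb : A), rTE (rTE ψ aa) bb = rTE ψ (aa * bb) := by
    intro ψ aa bb
    refine span_ext' hTEspan ((rTE.flip bb).comp (rTE.flip aa)) (rTE.flip (aa * bb)) ?_ ψ
    rintro x ⟨⟨ξ, g⟩, rfl⟩
    simp [AddMonoidHom.flip_apply, hrTE, hrE1]
  have hF9 : ∀ (ψ : TE) (aa : A),
      DT (rTE ψ aa) - WL (rTE ψ aa)
        = rT2E (DT ψ - WL ψ) aa - QuotientAddGroup.mk' JK (C ψ (d0 aa)) := by
    intro ψ aa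
    rw [hDr, hWr, map_sub, AddMonoidHom.sub_apply]
    abel
  have hσd : ∀ (f : E) (t : A),
      σ (tensET f (d0 t)) = nabE (rE f t) - rTE (nabE f) t := by
    intro f t
    rw [hbiconn]
    abel
  -- the main per-generator computation
  have main : ∀ (e : E) (p q : ℕ) (a b : Fin p → A) (r s : Fin q → A) (c c' : A),
      ((∑ i, a i • d0 (b i)) = ∑ j, rΩ (d0 (r j)) (s j)) →
      Φ (imap e (c • rT11 ((∑ i, tens11 (d0 (a i)) (d0 (b i)))
          + ∑ j, tens11 (d0 (r j)) (d0 (s j))) c')) ∈ JK := by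
    intro e p q a b r s c c' hrel
    set e' : E := rE e c with he'
    -- Ψ η = [C (∇e') η] − (DT − WL)(σ(e'⊗η))
    set Ψ : Ω1 →+ T11E ⧸ JK :=
      ((QuotientAddGroup.mk' JK).comp (C (nabE e')))
        - ((DT - WL).comp (σ.comp (tensET e'))) with hΨ
    have hΨapp : ∀ η : Ω1,
        Ψ η = QuotientAddGroup.mk' JK (C (nabE e') η)
          - (DT (σ (tensET e' η)) - WL (σ (tensET e' η))) := by
      intro η
      simp [hΨ, AddMonoidHom.sub_apply, AddMonoidHom.comp_apply]
    -- σ swallows left multiplication in the Ω¹ slot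
    have hSw : ∀ t : A, σ (tensET e (c • d0 t)) = σ (tensET e' (d0 t)) := by
      intro t
      have h1 : c • d0 t = d0 (c * t) - rΩ (d0 c) t := by
        rw [hleib]; abel
      rw [h1, map_sub, map_sub, hσd, hσrmod, hσd, map_sub,
          AddMonoidHom.sub_apply, hL1, hσd, ← hrE1]
      abel
    -- Ψ vanishes on exact forms (uses hR)
    have hΨ0 : ∀ t : A, Ψ (d0 t) = 0 := by
      intro t
      have h4 : DT (σ (tensET e' (d0 t))) - WL (σ (tensET e' (d0 t)))
          = QuotientAddGroup.mk' JK (C (nabE e') (d0 t)) := by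
        rw [hσd, map_sub, map_sub,
            show ∀ p' q' u v : T11E ⧸ JK, p' - q' - (u - v) = (p' - u) - (q' - v)
              from by intros; abel,
            hR, hF9]
        abel
      rw [hΨapp, h4, sub_self]
    -- the key exchange identity
    have hK1 : ∀ (η : Ω1) (bb : A),
        QuotientAddGroup.mk' JK (C (σ (tensET e' η)) (d0 bb))
          = Ψ (rΩ η bb) - rT2E (Ψ η) bb := by
      intro η bb
      have h1 : Ψ (rΩ η bb)
          = rT2E (Ψ η) bb + QuotientAddGroup.mk' JK (C (σ (tensET e' η)) (d0 bb)) := by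
        rw [hΨapp, hσrmod, hF9 (σ (tensET e' η)) bb, hCr, hΨapp]
        simp only [map_sub, AddMonoidHom.sub_apply]
        abel
      rw [h1]; abel
    -- expand the generator
    have hgen : c • rT11 ((∑ i, tens11 (d0 (a i)) (d0 (b i)))
          + ∑ j, tens11 (d0 (r j)) (d0 (s j))) c'
        = (∑ i, tens11 (c • d0 (a i)) (rΩ (d0 (b i)) c'))
          + ∑ j, tens11 (c • d0 (r j)) (rΩ (d0 (s j)) c') := by
      rw [map_add, AddMonoidHom.add_apply, map_sum, map_sum,
          AddMonoidHom.finset_sum_apply, AddMonoidHom.finset_sum_apply,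
          smul_add, Finset.smul_sum, Finset.smul_sum]
      simp [hrT11, h11mod]
    have hterm : ∀ (t u : A),
        QuotientAddGroup.mk' JK (C (σ (tensET e (c • d0 t))) (rΩ (d0 u) c'))
          = rT2E (Ψ (rΩ (d0 t) u)) c' := by
      intro t u
      rw [hSw, hCr, hK1, hΨ0]
      simp
    have hcomb : ∀ (n : ℕ) (ξ : Fin n → Ω1),
        (∑ i, rT2E (Ψ (ξ i)) c') = rT2E (Ψ (∑ i, ξ i)) c' := by
      intro n ξ
      rw [map_sum Ψ, map_sum rT2E, AddMonoidHom.finset_sum_apply]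
    have harg : (∑ i, rΩ (d0 (a i)) (b i)) + (∑ j, rΩ (d0 (r j)) (s j))
        = ∑ i, d0 (a i * b i) := by
      rw [← hrel, ← Finset.sum_add_distrib]
      refine Finset.sum_congr rfl fun i _ => ?_
      rw [hleib]; abel
    have hz : QuotientAddGroup.mk' JK
        (Φ (imap e (c • rT11 ((∑ i, tens11 (d0 (a i)) (d0 (b i)))
          + ∑ j, tens11 (d0 (r j)) (d0 (s j))) c'))) = 0 := by
      rw [hgen]
      simp only [map_add, map_sum, hΦ]
      rw [Finset.sum_congr rfl (fun i _ => hterm (a i) (b i)),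
          Finset.sum_congr rfl (fun j _ => hterm (r j) (s j)),
          hcomb, hcomb, ← AddMonoidHom.add_apply, ← map_add, ← map_add Ψ, harg,
          map_sum Ψ]
      simp [hΨ0]
    exact (QuotientAddGroup.eq_zero_iff _).mp (by simpa using hz)
  -- part 1
  have part1 : ∀ (e : E), ∀ x ∈ K, Φ (imap e x) ∈ JK := by
    intro e x hx
    rw [hK] at hx
    have hle : AddSubgroup.closure
        {x : T11 | ∃ (p q : ℕ) (a b : Fin p → A) (r s : Fin q → A) (c c' : A),
          (∑ i, a i • d0 (b i)) = (∑ j, rΩ (d0 (r j)) (s j)) ∧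
          x = c • rT11 ((∑ i, tens11 (d0 (a i)) (d0 (b i)))
                        + ∑ j, tens11 (d0 (r j)) (d0 (s j))) c'}
        ≤ AddSubgroup.comap ((Φ.comp (imap e))) JK := by
      rw [AddSubgroup.closure_le]
      rintro y ⟨p, q, a, b, r, s, c, c', hrel, rfl⟩
      simpa [AddSubgroup.mem_comap] using main e p q a b r s c c' hrel
    simpa [AddSubgroup.mem_comap] using hle hx
  refine ⟨part1, ?_⟩
  have hker : ∀ z ∈ JE, ((QuotientAddGroup.mk' JK).comp Φ) z = 0 := by
    intro z hz
    rw [hJE] at hz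
    have hle : AddSubgroup.closure {y : ET11 | ∃ x ∈ K, ∃ e : E, y = imap e x}
        ≤ ((QuotientAddGroup.mk' JK).comp Φ).ker := by
      rw [AddSubgroup.closure_le]
      rintro y ⟨x, hxK, e, rfl⟩
      have := part1 e x hxK
      simpa [AddMonoidHom.mem_ker, QuotientAddGroup.eq_zero_iff] using this
    simpa [AddMonoidHom.mem_ker] using hle hz
  refine ⟨QuotientAddGroup.lift JE ((QuotientAddGroup.mk' JK).comp Φ) hker, ?_⟩
  intro z
  simp
  rfl
end

section
/- For a line A-module L with extendable bimodule connection whose curvature R_L is a bimodule map, there exists a unique central 2-form ω_L ∈ Ω² (commuting with all of A) such that R_L(e) = ω_L ⊗ e for all e ∈ L; moreover for two such line modules L, M, the curvature 2-form of the tensor product connection on L⊗_AM is ω_{L⊗M} = ω_L + Φ̂_L(ω_M), where Φ̂_L(ξ)⊗e = σ_L(e⊗ξ) defines the extended Fröhlich map on central forms. -/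
/-- line modules: for a line `A`-module `L` with extendable bimodule
connection whose curvature `R_L` is a bimodule map, there is a unique central 2-form
`ω_L ∈ Ω²` with `R_L(e) = ω_L ⊗ e` for all `e ∈ L`; and for two such line modules
`L, M` the curvature 2-form of the tensor product connection on `L⊗_A M` is
`ω_{L⊗M} = ω_L + Φ̂_L(ω_M)`, where `Φ̂_L(ξ)⊗e = σ_L(e⊗ξ)` is the extended Fröhlich
map on central forms.  The line-module (Morita) property is encoded by the standard
fact that every right module map `L → Ω²⊗_A L` is `e ↦ ω⊗e` for a unique `ω`.
Abstract realisations: `TL = Ω¹⊗L`, `T2L = Ω²⊗L`, `LT = L⊗Ω¹`, `LT2 = L⊗Ω²`,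
`TM = Ω¹⊗M`, `T2M = Ω²⊗M`, `MT = M⊗Ω¹`, `LM = L⊗M`, `T2LM = Ω²⊗L⊗M`;
curvatures are `R = (d⊗id − id∧∇)∘∇` and
`R_{L⊗M} = R_L⊗id + (σ_L⊗id)(id⊗R_M)` (tensor curvature formula). -/
theorem line_module_curvature_two_form
    {A Ω1 Ω2 L TL T2L LT LT2 M TM T2M MT LM T2LM : Type*} [Ring A]
    [AddCommGroup Ω1] [AddCommGroup Ω2] [AddCommGroup L] [AddCommGroup TL]
    [AddCommGroup T2L] [AddCommGroup LT] [AddCommGroup LT2]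
    [AddCommGroup M] [AddCommGroup TM] [AddCommGroup T2M] [AddCommGroup MT]
    [AddCommGroup LM] [AddCommGroup T2LM]
    [Module A Ω1] [Module A Ω2] [Module A L] [Module A TL] [Module A T2L]
    [Module A M]
    -- right actions on the calculus
    (rΩ1 : Ω1 →+ A →+ Ω1) (rΩ2 : Ω2 →+ A →+ Ω2)
    -- differentials and wedge
    (d0 : A →+ Ω1) (d1 : Ω1 →+ Ω2) (w11 : Ω1 →+ Ω1 →+ Ω2)
    (hleib : ∀ a b : A, d0 (a * b) = a • d0 b + rΩ1 (d0 a) b)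
    (hd2 : ∀ a : A, d1 (d0 a) = 0)
    -- the bimodule L
    (rL : L →+ A →+ L)
    -- TL = Ω¹⊗_A L, T2L = Ω²⊗_A L
    (tensL : Ω1 →+ L →+ TL)
    (hTLmod : ∀ (a : A) (ξ : Ω1) (e : L), a • tensL ξ e = tensL (a • ξ) e)
    (tens2L : Ω2 →+ L →+ T2L)
    (h2Lmod : ∀ (a : A) (ω : Ω2) (e : L), a • tens2L ω e = tens2L (a • ω) e)
    (rT2L : T2L →+ A →+ T2L)
    (hrT2L : ∀ (ω : Ω2) (e : L) (a : A),
      rT2L (tens2L ω e) a = tens2L ω (rL e a))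
    (h2Lbal : ∀ (ω : Ω2) (a : A) (e : L),
      tens2L (rΩ2 ω a) e = tens2L ω (a • e))
    -- the bimodule connection (∇_L, σ_L) and its degree-2 extension σ_L²
    (tensLT : L →+ Ω1 →+ LT) (tensLT2 : L →+ Ω2 →+ LT2)
    (nabL : L →+ TL)
    (hconnL : ∀ (a : A) (e : L), nabL (a • e) = tensL (d0 a) e + a • nabL e)
    (σL : LT →+ TL) (σL2 : LT2 →+ T2L)
    (rTL : TL →+ A →+ TL)
    (hrTL : ∀ (ξ : Ω1) (e : L) (a : A), rTL (tensL ξ e) a = tensL ξ (rL e a))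
    (hbiconnL : ∀ (e : L) (a : A),
      nabL (rL e a) = σL (tensLT e (d0 a)) + rTL (nabL e) a)
    (w1L : Ω1 → TL →+ T2L)
    (hw1L : ∀ (ξ α : Ω1) (e : L), w1L ξ (tensL α e) = tens2L (w11 ξ α) e)
    (BwL : TL →+ Ω1 →+ T2L)
    (hBwL : ∀ (ξ : Ω1) (e : L) (η : Ω1),
      BwL (tensL ξ e) η = w1L ξ (σL (tensLT e η)))
    (hextL : ∀ (e : L) (ξ η : Ω1),
      σL2 (tensLT2 e (w11 ξ η)) = BwL (σL (tensLT e ξ)) η)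
    -- the curvature of L, a bimodule map
    (DT : TL →+ T2L)
    (hDT : ∀ (ξ : Ω1) (e : L), DT (tensL ξ e) = tens2L (d1 ξ) e)
    (WN : TL →+ T2L)
    (hWN : ∀ (ξ : Ω1) (e : L), WN (tensL ξ e) = w1L ξ (nabL e))
    (RL : L →+ T2L)
    (hRLdef : ∀ e : L, RL e = DT (nabL e) - WN (nabL e))
    (hRLl : ∀ (a : A) (e : L), RL (a • e) = a • RL e)
    (hRLr : ∀ (e : L) (a : A), RL (rL e a) = rT2L (RL e) a)
    -- the line-module (Morita) property of L with coefficients Ω²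
    (hMorita : ∀ S : L →+ T2L,
      (∀ (e : L) (a : A), S (rL e a) = rT2L (S e) a) →
      ∃! ω : Ω2, ∀ e : L, S e = tens2L ω e)
    -- the second line module M with its connection and curvature
    (rM : M →+ A →+ M)
    (tensM : Ω1 →+ M →+ TM) (tens2M : Ω2 →+ M →+ T2M)
    (nabM : M →+ TM)
    (w1M : Ω1 → TM →+ T2M)
    (hw1M : ∀ (ξ α : Ω1) (m : M), w1M ξ (tensM α m) = tens2M (w11 ξ α) m)
    (DTM : TM →+ T2M)
    (hDTM : ∀ (ξ : Ω1) (m : M), DTM (tensM ξ m) = tens2M (d1 ξ) m)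
    (WNM : TM →+ T2M)
    (hWNM : ∀ (ξ : Ω1) (m : M), WNM (tensM ξ m) = w1M ξ (nabM m))
    (RM : M →+ T2M)
    (hRMdef : ∀ m : M, RM m = DTM (nabM m) - WNM (nabM m))
    -- L⊗_A M and Ω²⊗_A L⊗_A M, and the curvature of the tensor product connection
    (tensLM : L →+ M →+ LM)
    (hLMspan : ∀ z : LM,
      z ∈ AddSubgroup.closure (Set.range fun p : L × M => tensLM p.1 p.2))
    (tens2LM : Ω2 →+ LM →+ T2LM)
    (j : T2L →+ M →+ T2LM)
    (hj : ∀ (ω : Ω2) (e : L) (m : M),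
      j (tens2L ω e) m = tens2LM ω (tensLM e m))
    (SL : L → T2M →+ T2LM)
    (hSL : ∀ (e : L) (ω : Ω2) (m : M),
      SL e (tens2M ω m) = j (σL2 (tensLT2 e ω)) m)
    (RLM : LM →+ T2LM)
    (hRLM : ∀ (e : L) (m : M),
      RLM (tensLM e m) = j (RL e) m + SL e (RM m))
    -- the extended Fröhlich map on central 2-forms
    (Φhat : Ω2 → Ω2)
    (hΦ : ∀ ω : Ω2, (∀ a : A, a • ω = rΩ2 ω a) →
      ∀ e : L, σL2 (tensLT2 e ω) = tens2L (Φhat ω) e) :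
    -- (1) existence and uniqueness of the central curvature 2-form of L
    (∃! ω : Ω2, (∀ a : A, a • ω = rΩ2 ω a) ∧ ∀ e : L, RL e = tens2L ω e)
    ∧
    -- (2) the curvature 2-form of L⊗_A M is ω_L + Φ̂_L(ω_M)
    (∀ ωL ωM : Ω2,
      ((∀ a : A, a • ωL = rΩ2 ωL a) ∧ ∀ e : L, RL e = tens2L ωL e) →
      ((∀ a : A, a • ωM = rΩ2 ωM a) ∧ ∀ m : M, RM m = tens2M ωM m) →
      ∀ z : LM, RLM z = tens2LM (ωL + Φhat ωM) z) := by

  obtain ⟨ω, hω, huniq⟩ := hMorita RL hRLr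
  have hcent : ∀ a : A, a • ω = rΩ2 ω a := by
    intro a
    obtain ⟨ω', hω', huniq'⟩ := hMorita (tens2L (a • ω))
      (fun e b => (hrT2L (a • ω) e b).symm)
    have h1 : a • ω = ω' := huniq' _ (fun e => rfl)
    have h2 : rΩ2 ω a = ω' := by
      refine huniq' _ (fun e => ?_)
      rw [← h2Lmod, ← hω, ← hRLl, hω, ← h2Lbal]
    rw [h1, h2]
  constructor
  · exact ⟨ω, ⟨hcent, hω⟩, fun ω' h => huniq ω' h.2⟩
  · rintro ωL ωM ⟨hLc, hLr⟩ ⟨hMc, hMr⟩ z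
    have key : ∀ (e : L) (m : M),
        RLM (tensLM e m) = tens2LM (ωL + Φhat ωM) (tensLM e m) := by
      intro e m
      rw [hRLM, hLr, hMr, hj, hSL, hΦ ωM hMc e, hj, map_add,
        AddMonoidHom.add_apply]
    have hz := hLMspan z
    have : z ∈ AddMonoidHom.eqLocus RLM (tens2LM (ωL + Φhat ωM)) := by
      refine AddSubgroup.closure_le _ |>.mpr ?_ hz
      rintro _ ⟨⟨e, m⟩, rfl⟩
      exact key e m
    exact this
end
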